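/- Let α be a closed finite execution of A and α' a finite execution of A such that the final configurations of α and α' are indistinguishable to the referee p and to some competitor q. Then W(α) ∩ W(α') ≠ ∅. -/

import Mathlib

set_option autoImplicit false

/-! ## Base objects and primitives -/

/-- A base object: a shared-memory object accessed via atomic primitives.
Responses of primitives are encoded as lists of naturals. -/
structure BaseObject : Type 1 where
  State : Type
  init : State
  Prim : Type
  apply : Prim → State → State × List ℕ

/-- A base object has *interfering* primitives if at any state, the application of
any pair of primitives either commutes or one overwrites the other. -/
def Interfering (B : BaseObject) : Prop :=
  ∀ (f g : B.Prim) (s : B.State),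
    (B.apply g (B.apply f s).1).1 = (B.apply f (B.apply g s).1).1 ∨
    (B.apply f (B.apply g s).1).1 = (B.apply f s).1 ∨
    (B.apply g (B.apply f s).1).1 = (B.apply g s).1

/-- A read/write register: primitive `some v` writes `v`, primitive `none` reads. -/
def RWRegister : BaseObject where
  State := ℕ
  init := 0
  Prim := Option ℕ
  apply := fun p s =>
    match p with
    | some v => (v, [])
    | none => (s, [s])

/-- A `w`-window register stores the sequence of the last `w` values written to it;
`some v` appends `v` (dropping the oldest value if the length exceeds `w`),
`none` reads the stored sequence. -/
def WindowRegister (w : ℕ) : BaseObject where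
  State := List ℕ
  init := []
  Prim := Option ℕ
  apply := fun p s =>
    match p with
    | some v => ((s ++ [v]).drop (s.length + 1 - w), [])
    | none => (s, s)

/-- A test&set object: `T&S()` atomically sets the bit and returns the previous value. -/
def TestAndSet : BaseObject where
  State := Bool
  init := false
  Prim := Unit
  apply := fun _ s => (true, [if s then 1 else 0])

/-! ## Sequential specifications -/

/-- A (possibly nondeterministic) sequential specification for `n` processes.
`δ s i op s' r` holds if process `i` invoking `op` in state `s` may move the object
to state `s'` returning `r`.  `allowed i hist op` says whether process `i`, having
already invoked the operations `hist`, may invoke `op` (used to express one-shot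
objects and the referee/competitor roles). -/
structure Spec (n : ℕ) : Type 1 where
  Op : Type
  Res : Type
  State : Type
  init : State
  δ : State → Fin n → Op → State → Res → Prop
  allowed : Fin n → List Op → Op → Bool

/-- Valid sequential executions of a specification, starting at a given state. -/
inductive SeqRun {n : ℕ} (S : Spec n) : S.State → List (Fin n × S.Op × S.Res) → Prop
  | nil (s : S.State) : SeqRun S s []
  | cons {s : S.State} {i : Fin n} {op : S.Op} {s' : S.State} {r : S.Res}
      {l : List (Fin n × S.Op × S.Res)} :
      S.δ s i op s' r → SeqRun S s' l → SeqRun S s ((i, op, r) :: l)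

/-! ## Implementations, configurations and executions -/

/-- Events of an execution: high-level invocations/responses and primitive steps. -/
inductive Event (n : ℕ) (S : Spec n) : Type
  | inv (i : Fin n) (op : S.Op)
  | res (i : Fin n) (r : S.Res)
  | step (i : Fin n)

/-- The process performing an event. -/
def Event.proc {n : ℕ} {S : Spec n} : Event n S → Fin n
  | .inv i _ => i
  | .res i _ => i
  | .step i => i

/-- An implementation of the high-level object `S` for `n` processes from base objects
`M o`, `o : ι`: a deterministic state machine per process.  In local state `ℓ`,
process `i`'s next primitive step applies `prim i ℓ` to base object `obj i ℓ` and
updates the local state with the response via `updL`; `ret i ℓ` is the response of the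
current high-level operation once it is ready. -/
structure Impl (n : ℕ) (S : Spec n) (ι : Type) (M : ι → BaseObject) : Type 1 where
  Local : Fin n → Type
  initL : ∀ i, Local i
  invokeL : ∀ i, S.Op → Local i → Local i
  obj : ∀ i, Local i → ι
  prim : ∀ i (ℓ : Local i), (M (obj i ℓ)).Prim
  updL : ∀ i, Local i → List ℕ → Local i
  ret : ∀ i, Local i → Option S.Res

/-- A configuration: states of all base objects and all processes
(local state, pending operation, history of invoked operations). -/
structure Config {n : ℕ} {S : Spec n} {ι : Type} {M : ι → BaseObject}
    (A : Impl n S ι M) : Type where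
  mem : ∀ o, (M o).State
  loc : ∀ i, A.Local i
  pend : Fin n → Option S.Op
  hist : Fin n → List S.Op

open Classical in
/-- Update the state of one base object in the memory. -/
noncomputable def updMem {ι : Type} {M : ι → BaseObject}
    (mem : ∀ o, (M o).State) (o : ι) (s : (M o).State) : ∀ o', (M o').State :=
  fun o' =>
    if h : o' = o then cast (congrArg (fun x => (M x).State) h).symm s else mem o'

open Classical in
/-- The (deterministic) transition of a configuration by an event; `none` if the event
is not enabled.  An invocation requires the process to be idle and the operation to be
allowed by the specification; a primitive step requires a pending operation whose
response is not yet ready; a response requires the response to be ready. -/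
noncomputable def nextConfig {n : ℕ} {S : Spec n} {ι : Type} {M : ι → BaseObject}
    (A : Impl n S ι M) (C : Config A) : Event n S → Option (Config A)
  | .inv i op =>
    match C.pend i with
    | some _ => none
    | none =>
      if S.allowed i (C.hist i) op then
        some { C with
          pend := Function.update C.pend i (some op)
          hist := Function.update C.hist i (C.hist i ++ [op])
          loc := Function.update C.loc i (A.invokeL i op (C.loc i)) }
      else none
  | .step i =>
    match C.pend i with
    | none => none
    | some _ =>
      if A.ret i (C.loc i) = none then
        some { C with
          mem := updMem C.mem (A.obj i (C.loc i))
            ((M (A.obj i (C.loc i))).apply (A.prim i (C.loc i))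
              (C.mem (A.obj i (C.loc i)))).1
          loc := Function.update C.loc i
            (A.updL i (C.loc i)
              ((M (A.obj i (C.loc i))).apply (A.prim i (C.loc i))
                (C.mem (A.obj i (C.loc i)))).2) }
      else none
  | .res i r =>
    match C.pend i with
    | none => none
    | some _ =>
      if A.ret i (C.loc i) = some r then
        some { C with pend := Function.update C.pend i none }
      else none

/-- The initial configuration. -/
def initConfig {n : ℕ} {S : Spec n} {ι : Type} {M : ι → BaseObject}
    (A : Impl n S ι M) : Config A :=
  { mem := fun o => (M o).init
    loc := fun i => A.initL i
    pend := fun _ => none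
    hist := fun _ => [] }

/-- The configuration reached by a finite sequence of events from the initial
configuration (`none` if the sequence is not a valid execution). -/
noncomputable def execConfig {n : ℕ} {S : Spec n} {ι : Type} {M : ι → BaseObject}
    (A : Impl n S ι M) (α : List (Event n S)) : Option (Config A) :=
  α.foldlM (fun C e => nextConfig A C e) (initConfig A)

/-- `α` is a (finite) execution of the implementation `A`. -/
def IsExec {n : ℕ} {S : Spec n} {ι : Type} {M : ι → BaseObject}
    (A : Impl n S ι M) (α : List (Event n S)) : Prop :=
  (execConfig A α).isSome = true

/-- The length-`m` prefix of an infinite sequence of events. -/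
def prefE {n : ℕ} {S : Spec n} (E : ℕ → Event n S) (m : ℕ) : List (Event n S) :=
  (List.range m).map E

/-! ## Linearizability -/

/-- In execution `α`, the invocation at position `j` is matched by the response at
position `k` with output `r` (no earlier response of the same process intervening). -/
def Matches {n : ℕ} {S : Spec n} (α : List (Event n S)) (j k : ℕ) (r : S.Res) : Prop :=
  ∃ i op, α[j]? = some (Event.inv i op) ∧ α[k]? = some (Event.res i r) ∧ j < k ∧
    ∀ m, j < m → m < k → ∀ r', α[m]? ≠ some (Event.res i r')

/-- The operation invoked at position `j` precedes (returns before the invocation of)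
the operation invoked at position `j'`. -/
def Precedes {n : ℕ} {S : Spec n} (α : List (Event n S)) (j j' : ℕ) : Prop :=
  ∃ k r, Matches α j k r ∧ k < j'

/-- `σ` is a linearization of the execution `α`: a sequence of operation instances of
`α` (identified by the position of their invocation, paired with a response) that
contains every complete operation of `α` with its actual output and possibly some
pending ones, respects the real-time order of `α`, and is a valid sequential
execution of the specification. -/
structure IsLinearization {n : ℕ} (S : Spec n) (α : List (Event n S))
    (σ : List (ℕ × S.Res)) : Prop where
  inv_mem : ∀ p ∈ σ, ∃ i op, α[p.1]? = some (Event.inv i op)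
  nodup : (σ.map Prod.fst).Nodup
  complete_mem : ∀ j k r, Matches α j k r → (j, r) ∈ σ
  complete_out : ∀ j k r r', Matches α j k r → (j, r') ∈ σ → r' = r
  realtime : σ.Pairwise (fun a b => ¬ Precedes α b.1 a.1)
  valid : ∃ l : List (Fin n × S.Op × S.Res),
    List.Forall₂ (fun (p : ℕ × S.Res) (e : Fin n × S.Op × S.Res) =>
      α[p.1]? = some (Event.inv e.1 e.2.1) ∧ p.2 = e.2.2) σ l ∧
    SeqRun S S.init l

/-- `L` is a linearization function for `A`: it maps every execution to a
linearization of it. -/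
def IsLinFun {n : ℕ} {S : Spec n} {ι : Type} {M : ι → BaseObject}
    (A : Impl n S ι M) (L : List (Event n S) → List (ℕ × S.Res)) : Prop :=
  ∀ α, IsExec A α → IsLinearization S α (L α)

/-- `L` is prefix-closed: the linearization of a prefix is a prefix of the
linearization of an extension. -/
def PrefixClosedLin {n : ℕ} {S : Spec n} {ι : Type} {M : ι → BaseObject}
    (A : Impl n S ι M) (L : List (Event n S) → List (ℕ × S.Res)) : Prop :=
  ∀ α β, IsExec A (α ++ β) → L α <+: L (α ++ β)

/-- `L` is subsequence-closed: the linearization of a prefix is a subsequence of the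
linearization of an extension. -/
def SubseqClosedLin {n : ℕ} {S : Spec n} {ι : Type} {M : ι → BaseObject}
    (A : Impl n S ι M) (L : List (Event n S) → List (ℕ × S.Res)) : Prop :=
  ∀ α β, IsExec A (α ++ β) → List.Sublist (L α) (L (α ++ β))

/-- Strong linearizability: there is a prefix-closed linearization function. -/
def StronglyLinearizable {n : ℕ} {S : Spec n} {ι : Type} {M : ι → BaseObject}
    (A : Impl n S ι M) : Prop :=
  ∃ L, IsLinFun A L ∧ PrefixClosedLin A L

/-- Decisive linearizability: there is a subsequence-closed linearization function. -/
def DecisivelyLinearizable {n : ℕ} {S : Spec n} {ι : Type} {M : ι → BaseObject}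
    (A : Impl n S ι M) : Prop :=
  ∃ L, IsLinFun A L ∧ SubseqClosedLin A L

/-! ## Progress conditions -/

/-- Wait-freedom: in every infinite execution, a process that takes infinitely many
primitive steps completes infinitely many operations. -/
def WaitFree {n : ℕ} {S : Spec n} {ι : Type} {M : ι → BaseObject}
    (A : Impl n S ι M) : Prop :=
  ∀ E : ℕ → Event n S, (∀ m, IsExec A (prefE E m)) →
    ∀ i : Fin n, (∀ m, ∃ m', m ≤ m' ∧ E m' = Event.step i) →
      ∀ m, ∃ m', m ≤ m' ∧ ∃ r, E m' = Event.res i r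

/-- Lock-freedom: in every infinite execution, infinitely many operations complete. -/
def LockFree {n : ℕ} {S : Spec n} {ι : Type} {M : ι → BaseObject}
    (A : Impl n S ι M) : Prop :=
  ∀ E : ℕ → Event n S, (∀ m, IsExec A (prefE E m)) →
    ∀ m, ∃ m', m ≤ m' ∧ ∃ i r, E m' = Event.res i r

/-! ## High-level object specifications -/

/-- Queue: operation `some v` is `enqueue(v)` (returning `none`), operation `none` is
`dequeue()`, returning the oldest enqueued value not yet dequeued (`some v`) or
`none` (empty). -/
def QueueSpec (n : ℕ) : Spec n where
  Op := Option ℕ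
  Res := Option ℕ
  State := List ℕ
  init := []
  δ := fun s _ op s' r =>
    (∃ v, op = some v ∧ s' = s ++ [v] ∧ r = none) ∨
    (op = none ∧ ((s = [] ∧ s' = [] ∧ r = none) ∨ ∃ v t, s = v :: t ∧ s' = t ∧ r = some v))
  allowed := fun _ _ _ => true

/-- Stack: operation `some v` is `push(v)` (returning `none`), operation `none` is
`pop()`, returning the most recently pushed value not yet popped (`some v`) or
`none` (empty). -/
def StackSpec (n : ℕ) : Spec n where
  Op := Option ℕ
  Res := Option ℕ
  State := List ℕ
  init := []
  δ := fun s _ op s' r =>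
    (∃ v, op = some v ∧ s' = v :: s ∧ r = none) ∨
    (op = none ∧ ((s = [] ∧ s' = [] ∧ r = none) ∨ ∃ v t, s = v :: t ∧ s' = t ∧ r = some v))
  allowed := fun _ _ _ => true

/-- Operations of the (one-shot or long-lived) contest objects. -/
inductive ContestOp : Type
  | compete
  | decide

/-- The one-shot contest object for `n` processes: each competitor `p_1, …, p_{n-1}`
may invoke `compete()` once, which always returns `true`; the referee `p_0` may invoke
`decide()` once, which returns the index of the first process that executed
`compete()` (`Sum.inr i`) or `false` (`Sum.inl false`) if there is no such operation. -/
def ContestSpec (n : ℕ) : Spec n where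
  Op := ContestOp
  Res := Bool ⊕ ℕ
  State := Option (Fin n) × Bool
  init := (none, false)
  δ := fun s i op s' r =>
    (op = ContestOp.compete ∧ i.val ≠ 0 ∧ r = Sum.inl true ∧ s'.2 = s.2 ∧
      s'.1 = (match s.1 with | some j => some j | none => some i)) ∨
    (op = ContestOp.decide ∧ i.val = 0 ∧ s.2 = false ∧ s' = (s.1, true) ∧
      r = (match s.1 with | some j => Sum.inr j.val | none => Sum.inl false))
  allowed := fun i hist op =>
    hist.isEmpty &&
      (match op with
       | ContestOp.compete => i.val != 0
       | ContestOp.decide => i.val == 0)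

/-- The long-lived contest object for `n` processes: each competitor `p_1, …, p_{n-1}`
may invoke `compete()` any number of times (returning nothing, i.e. `none`); the
referee `p_0` may invoke `decide()` at most once, which returns `some x` for some
integer `x` such that every competitor has executed at most `x` operations so far. -/
def LLContestSpec (n : ℕ) : Spec n where
  Op := ContestOp
  Res := Option ℕ
  State := (Fin n → ℕ) × Bool
  init := (fun _ => 0, false)
  δ := fun s i op s' r =>
    (op = ContestOp.compete ∧ i.val ≠ 0 ∧
      s' = (Function.update s.1 i (s.1 i + 1), s.2) ∧ r = none) ∨
    (op = ContestOp.decide ∧ i.val = 0 ∧ s.2 = false ∧ s'.2 = true ∧ s'.1 = s.1 ∧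
      ∃ x : ℕ, r = some x ∧ ∀ j : Fin n, j.val ≠ 0 → s.1 j ≤ x)
  allowed := fun i hist op =>
    match op with
    | ContestOp.compete => i.val != 0
    | ContestOp.decide => (i.val == 0) && hist.isEmpty

/-- Counter: operation `true` is `increment()` (returning `none`), operation `false`
is `read()`, returning the number of increments so far. -/
def CounterSpec (n : ℕ) : Spec n where
  Op := Bool
  Res := Option ℕ
  State := ℕ
  init := 0
  δ := fun s _ op s' r =>
    (op = true ∧ s' = s + 1 ∧ r = none) ∨ (op = false ∧ s' = s ∧ r = some s)
  allowed := fun _ _ _ => true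

/-- Max register: operation `some v` is `maxWrite(v)` (returning `none`), operation
`none` is `maxRead()`, returning the largest value written so far. -/
def MaxRegSpec (n : ℕ) : Spec n where
  Op := Option ℕ
  Res := Option ℕ
  State := ℕ
  init := 0
  δ := fun s _ op s' r =>
    (∃ v, op = some v ∧ s' = max s v ∧ r = none) ∨ (op = none ∧ s' = s ∧ r = some s)
  allowed := fun _ _ _ => true

/-- Snapshot with `n` components: operation `Sum.inl (j, v)` atomically updates
component `j` to `v` (returning `none`); operation `Sum.inr ()` is `scan()`,
atomically returning all components. -/
def SnapshotSpec (n : ℕ) : Spec n where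
  Op := (Fin n × ℕ) ⊕ Unit
  Res := Option (Fin n → ℕ)
  State := Fin n → ℕ
  init := fun _ => 0
  δ := fun s _ op s' r =>
    (∃ j v, op = Sum.inl (j, v) ∧ s' = Function.update s j v ∧ r = none) ∨
    (op = Sum.inr () ∧ s' = s ∧ r = some s)
  allowed := fun _ _ _ => true

/-- Fetch&increment: atomically returns the current value and increments it. -/
def FetchIncSpec (n : ℕ) : Spec n where
  Op := Unit
  Res := ℕ
  State := ℕ
  init := 0
  δ := fun s _ _ s' r => s' = s + 1 ∧ r = s
  allowed := fun _ _ _ => true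

/-- Fetch&add: `fetch&add(v)` atomically returns the current value and adds `v`. -/
def FetchAddSpec (n : ℕ) : Spec n where
  Op := ℕ
  Res := ℕ
  State := ℕ
  init := 0
  δ := fun s _ op s' r => s' = s + op ∧ r = s
  allowed := fun _ _ _ => true

/-! ## Valency machinery for the long-lived contest object -/

/-- A sequence of events involves only the competitors `p_1, …, p_{n-1}`. -/
def CompetitorsOnly {n : ℕ} {S : Spec n} (β : List (Event n S)) : Prop :=
  ∀ e ∈ β, (Event.proc e).val ≠ 0

/-- `decide()` appears in the linearization `L α` with output `x`. -/
def DecidesVal {n : ℕ}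
    (L : List (Event n (LLContestSpec n)) → List (ℕ × (LLContestSpec n).Res))
    (α : List (Event n (LLContestSpec n))) (x : ℕ) : Prop :=
  ∃ j : ℕ, ∃ i : Fin n, i.val = 0 ∧
    α[j]? = some (Event.inv i ContestOp.decide) ∧ (j, (some x : Option ℕ)) ∈ L α

/-- The competitors-valency `W(α)`: all `x` such that some finite competitors-only
extension `β` of `α` has `decide()` appearing in `L(αβ)` with output `x`. -/
def Wset {n : ℕ} {ι : Type} {M : ι → BaseObject} (A : Impl n (LLContestSpec n) ι M)
    (L : List (Event n (LLContestSpec n)) → List (ℕ × (LLContestSpec n).Res))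
    (α : List (Event n (LLContestSpec n))) : Set ℕ :=
  { x | ∃ β, CompetitorsOnly β ∧ IsExec A (α ++ β) ∧ DecidesVal L (α ++ β) x }

/-- `α` is competitors-closed: every infinite competitors-only extension of `α` has a
finite prefix `β` such that `decide()` appears in `L(αβ)`. -/
def ClosedExec {n : ℕ} {ι : Type} {M : ι → BaseObject} (A : Impl n (LLContestSpec n) ι M)
    (L : List (Event n (LLContestSpec n)) → List (ℕ × (LLContestSpec n).Res))
    (α : List (Event n (LLContestSpec n))) : Prop :=
  ∀ E : ℕ → Event n (LLContestSpec n),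
    (∀ m, (Event.proc (E m)).val ≠ 0) →
    (∀ m, IsExec A (α ++ prefE E m)) →
    ∃ m x, DecidesVal L (α ++ prefE E m) x

/-- `α` is competitors-supervalent: not competitors-closed. -/
def SupervalentExec {n : ℕ} {ι : Type} {M : ι → BaseObject}
    (A : Impl n (LLContestSpec n) ι M)
    (L : List (Event n (LLContestSpec n)) → List (ℕ × (LLContestSpec n).Res))
    (α : List (Event n (LLContestSpec n))) : Prop :=
  ¬ ClosedExec A L α

/-- The next event of process `r` in configuration `C` of an implementation of the
long-lived contest object: invoke its (unique) operation if idle, respond if the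
response is ready, and otherwise take its next primitive step. -/
noncomputable def llNextEvent {n : ℕ} {ι : Type} {M : ι → BaseObject}
    (A : Impl n (LLContestSpec n) ι M) (C : Config A) (r : Fin n) :
    Event n (LLContestSpec n) :=
  match C.pend r with
  | none => Event.inv r (if r.val = 0 then ContestOp.decide else ContestOp.compete)
  | some _ =>
    match A.ret r (C.loc r) with
    | some v => Event.res r v
    | none => Event.step r

/-- `α` extended by the next step of process `r` (written `αr` in the paper);
`α` is left unchanged if `r` has no enabled next step. -/
noncomputable def sched1 {n : ℕ} {ι : Type} {M : ι → BaseObject}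
    (A : Impl n (LLContestSpec n) ι M) (α : List (Event n (LLContestSpec n)))
    (r : Fin n) : List (Event n (LLContestSpec n)) :=
  match execConfig A α with
  | none => α
  | some C =>
    match nextConfig A C (llNextEvent A C r) with
    | none => α
    | some _ => α ++ [llNextEvent A C r]

/-- `α` extended by scheduling the listed processes, each taking its next step in
order; e.g. `sched A α [q, p]` is the execution `αqp` of the paper. -/
noncomputable def sched {n : ℕ} {ι : Type} {M : ι → BaseObject}
    (A : Impl n (LLContestSpec n) ι M) :
    List (Event n (LLContestSpec n)) → List (Fin n) → List (Event n (LLContestSpec n))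
  | α, [] => α
  | α, r :: rs => sched A (sched1 A α r) rs

/-- The final configurations of executions `α` and `α'` are indistinguishable to
process `r`: all base objects have the same states, and `r` is in the same state. -/
def ExecIndistTo {n : ℕ} {S : Spec n} {ι : Type} {M : ι → BaseObject}
    (A : Impl n S ι M) (α α' : List (Event n S)) (r : Fin n) : Prop :=
  ∃ C C', execConfig A α = some C ∧ execConfig A α' = some C' ∧
    C.mem = C'.mem ∧ C.loc r = C'.loc r ∧ C.pend r = C'.pend r ∧ C.hist r = C'.hist r


/-! ### Auxiliary infrastructure for the proof -/

section Aux

variable {n : ℕ} {S : Spec n} {ι : Type} {M : ι → BaseObject} {A : Impl n S ι M}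

theorem execConfig_append (A : Impl n S ι M) (α β : List (Event n S)) :
    execConfig A (α ++ β)
      = (execConfig A α).bind (fun C => β.foldlM (fun C e => nextConfig A C e) C) := by
  unfold execConfig
  rw [List.foldlM_append]
  rfl

theorem execConfig_snoc (A : Impl n S ι M) (α : List (Event n S)) (e : Event n S) :
    execConfig A (α ++ [e]) = (execConfig A α).bind (fun C => nextConfig A C e) := by
  rw [execConfig_append]
  cases execConfig A α with
  | none => rfl
  | some C =>
    simp only [Option.bind_some, List.foldlM_cons, List.foldlM_nil]
    cases nextConfig A C e <;> simp

theorem isExec_prefix {α β : List (Event n S)} (h : IsExec A (α ++ β)) : IsExec A α := by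
  unfold IsExec at h ⊢
  rw [execConfig_append] at h
  cases hC : execConfig A α with
  | none => rw [hC] at h; simp at h
  | some C => simp

/-- Effect of an event on the state of a process that is not performing it. -/
theorem nextConfig_other {C D : Config A} {e : Event n S} {i : Fin n}
    (h : nextConfig A C e = some D) (hne : e.proc ≠ i) :
    D.loc i = C.loc i ∧ D.pend i = C.pend i ∧ D.hist i = C.hist i := by
  cases e with
  | inv j op =>
    simp only [Event.proc] at hne
    cases hp : C.pend j with
    | some op' => simp [nextConfig, hp] at h
    | none =>
      simp only [nextConfig, hp] at h
      split at h
      · cases h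
        refine ⟨?_, ?_, ?_⟩ <;>
          simp [Function.update_of_ne (Ne.symm hne)]
      · cases h
  | res j r =>
    simp only [Event.proc] at hne
    cases hp : C.pend j with
    | none => simp [nextConfig, hp] at h
    | some op' =>
      simp only [nextConfig, hp] at h
      split at h
      · cases h
        refine ⟨rfl, ?_, rfl⟩
        simp [Function.update_of_ne (Ne.symm hne)]
      · cases h
  | step j =>
    simp only [Event.proc] at hne
    cases hp : C.pend j with
    | none => simp [nextConfig, hp] at h
    | some op' =>
      simp only [nextConfig, hp] at h
      split at h
      · cases h
        refine ⟨?_, rfl, rfl⟩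
        simp [Function.update_of_ne (Ne.symm hne)]
      · cases h

/-- Events by processes other than `i` along a run do not change `i`'s state. -/
theorem foldl_other {i : Fin n} :
    ∀ (γ : List (Event n S)) (C D : Config A),
      γ.foldlM (fun C e => nextConfig A C e) C = some D →
      (∀ e ∈ γ, e.proc ≠ i) →
      D.loc i = C.loc i ∧ D.pend i = C.pend i ∧ D.hist i = C.hist i := by
  intro γ
  induction γ with
  | nil => intro C D h _; cases h; exact ⟨rfl, rfl, rfl⟩
  | cons e γ ih =>
    intro C D h hproc
    rw [List.foldlM_cons] at h
    rcases Option.bind_eq_some_iff.mp h with ⟨C₁, h₁, h₂⟩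
    have o1 := nextConfig_other (A := A) h₁ (hproc e (by simp))
    have o2 := ih C₁ D h₂ (fun e' he' => hproc e' (by simp [he']))
    exact ⟨o2.1.trans o1.1, o2.2.1.trans o1.2.1, o2.2.2.trans o1.2.2⟩

end Aux


section Agree

variable {n : ℕ} {S : Spec n} {ι : Type} {M : ι → BaseObject} {A : Impl n S ι M}

/-- One-process transfer: if two configurations agree on the memory and on the state
of process `r`, then an event of `r` is enabled in one iff in the other, and the
resulting configurations again agree on the memory and the state of `r`. -/
theorem agree1_step {C C' D : Config A} {e : Event n S} {r : Fin n}
    (hm : C.mem = C'.mem) (hl : C.loc r = C'.loc r) (hp : C.pend r = C'.pend r)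
    (hh : C.hist r = C'.hist r) (hproc : e.proc = r)
    (h : nextConfig A C e = some D) :
    ∃ D', nextConfig A C' e = some D' ∧
      D.mem = D'.mem ∧ D.loc r = D'.loc r ∧ D.pend r = D'.pend r ∧ D.hist r = D'.hist r := by
  cases e with
  | inv i op =>
    simp only [Event.proc] at hproc; subst hproc
    cases hpend : C.pend i with
    | some op' => simp [nextConfig, hpend] at h
    | none =>
      have hpend' : C'.pend i = none := hp ▸ hpend
      simp only [nextConfig, hpend, hpend'] at h ⊢
      split at h
      · rename_i hall
        cases h
        rw [hh] at hall
        rw [if_pos hall]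
        exact ⟨_, rfl, hm, by simp [hl], by simp, by simp [hh]⟩
      · cases h
  | res i rr =>
    simp only [Event.proc] at hproc; subst hproc
    cases hpend : C.pend i with
    | none => simp [nextConfig, hpend] at h
    | some op' =>
      have hpend' : C'.pend i = some op' := hp ▸ hpend
      simp only [nextConfig, hpend, hpend'] at h ⊢
      split at h
      · rename_i hret
        cases h
        rw [hl] at hret
        rw [if_pos hret]
        exact ⟨_, rfl, hm, hl, by simp, hh⟩
      · cases h
  | step i =>
    simp only [Event.proc] at hproc; subst hproc
    cases hpend : C.pend i with
    | none => simp [nextConfig, hpend] at h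
    | some op' =>
      have hpend' : C'.pend i = some op' := hp ▸ hpend
      simp only [nextConfig, hpend, hpend'] at h ⊢
      split at h
      · rename_i hret
        cases h
        rw [hl] at hret
        rw [if_pos hret]
        refine ⟨_, rfl, ?_, ?_, by simp [hp], hh⟩
        · rw [hl, hm]
        · simp only [Function.update_self]; rw [hl, hm]
      · cases h

/-- Two configurations agree on the memory and the states of `p` and `q`. -/
def Agree2 (A : Impl n S ι M) (p q : Fin n) (C C' : Config A) : Prop :=
  C.mem = C'.mem ∧
  C.loc p = C'.loc p ∧ C.pend p = C'.pend p ∧ C.hist p = C'.hist p ∧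
  C.loc q = C'.loc q ∧ C.pend q = C'.pend q ∧ C.hist q = C'.hist q

theorem agree2_step {p q : Fin n} {C C' D : Config A} {e : Event n S}
    (hA : Agree2 A p q C C') (hproc : e.proc = p ∨ e.proc = q)
    (h : nextConfig A C e = some D) :
    ∃ D', nextConfig A C' e = some D' ∧ Agree2 A p q D D' := by
  obtain ⟨hm, hlp, hpp, hhp, hlq, hpq, hhq⟩ := hA
  rcases hproc with hproc | hproc
  · obtain ⟨D', hD', h1, h2, h3, h4⟩ := agree1_step hm hlp hpp hhp hproc h
    refine ⟨D', hD', h1, h2, h3, h4, ?_, ?_, ?_⟩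
    · by_cases hq : e.proc = q
      · obtain ⟨D'', hD'', e1, e2, e3, e4⟩ := agree1_step hm hlq hpq hhq hq h
        rw [hD'] at hD''; cases hD''; exact e2
      · have o1 := nextConfig_other (A := A) h hq
        have o2 := nextConfig_other (A := A) hD' hq
        rw [o1.1, o2.1]; exact hlq
    · by_cases hq : e.proc = q
      · obtain ⟨D'', hD'', e1, e2, e3, e4⟩ := agree1_step hm hlq hpq hhq hq h
        rw [hD'] at hD''; cases hD''; exact e3
      · have o1 := nextConfig_other (A := A) h hq
        have o2 := nextConfig_other (A := A) hD' hq
        rw [o1.2.1, o2.2.1]; exact hpq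
    · by_cases hq : e.proc = q
      · obtain ⟨D'', hD'', e1, e2, e3, e4⟩ := agree1_step hm hlq hpq hhq hq h
        rw [hD'] at hD''; cases hD''; exact e4
      · have o1 := nextConfig_other (A := A) h hq
        have o2 := nextConfig_other (A := A) hD' hq
        rw [o1.2.2, o2.2.2]; exact hhq
  · obtain ⟨D', hD', h1, h2, h3, h4⟩ := agree1_step hm hlq hpq hhq hproc h
    refine ⟨D', hD', h1, ?_, ?_, ?_, h2, h3, h4⟩
    · by_cases hq : e.proc = p
      · obtain ⟨D'', hD'', e1, e2, e3, e4⟩ := agree1_step hm hlp hpp hhp hq h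
        rw [hD'] at hD''; cases hD''; exact e2
      · have o1 := nextConfig_other (A := A) h hq
        have o2 := nextConfig_other (A := A) hD' hq
        rw [o1.1, o2.1]; exact hlp
    · by_cases hq : e.proc = p
      · obtain ⟨D'', hD'', e1, e2, e3, e4⟩ := agree1_step hm hlp hpp hhp hq h
        rw [hD'] at hD''; cases hD''; exact e3
      · have o1 := nextConfig_other (A := A) h hq
        have o2 := nextConfig_other (A := A) hD' hq
        rw [o1.2.1, o2.2.1]; exact hpp
    · by_cases hq : e.proc = p
      · obtain ⟨D'', hD'', e1, e2, e3, e4⟩ := agree1_step hm hlp hpp hhp hq h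
        rw [hD'] at hD''; cases hD''; exact e4
      · have o1 := nextConfig_other (A := A) h hq
        have o2 := nextConfig_other (A := A) hD' hq
        rw [o1.2.2, o2.2.2]; exact hhp

theorem agree2_run {p q : Fin n} :
    ∀ (γ : List (Event n S)) (C C' D : Config A),
      Agree2 A p q C C' →
      (∀ e ∈ γ, e.proc = p ∨ e.proc = q) →
      γ.foldlM (fun C e => nextConfig A C e) C = some D →
      ∃ D', γ.foldlM (fun C e => nextConfig A C e) C' = some D' ∧ Agree2 A p q D D' := by
  intro γ
  induction γ with
  | nil => intro C C' D hA _ h; cases h; exact ⟨C', rfl, hA⟩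
  | cons e γ ih =>
    intro C C' D hA hproc h
    rw [List.foldlM_cons] at h
    rcases Option.bind_eq_some_iff.mp h with ⟨C₁, h₁, h₂⟩
    obtain ⟨C₁', h₁', hA₁⟩ := agree2_step hA (hproc e (by simp)) h₁
    obtain ⟨D', hD', hAD⟩ := ih C₁ C₁' D hA₁ (fun e' he' => hproc e' (by simp [he'])) h₂
    exact ⟨D', by rw [List.foldlM_cons, h₁']; simpa using hD', hAD⟩

end Agree


section ListHelpers

variable {n : ℕ} {S : Spec n}

theorem getElem?_append_of_some {β : Type*} {l : List β} {k : ℕ} {x : β}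
    (h : l[k]? = some x) (l' : List β) : (l ++ l')[k]? = some x := by
  have hk : k < l.length := by
    by_contra hk
    rw [List.getElem?_eq_none (Nat.le_of_not_lt hk)] at h
    exact (nomatch h)
  rw [List.getElem?_append_left hk]
  exact h

theorem snoc_cases {β : Type*} {l : List β} {e x : β} {k : ℕ}
    (h : (l ++ [e])[k]? = some x) : l[k]? = some x ∨ (k = l.length ∧ x = e) := by
  rcases Nat.lt_trichotomy k l.length with hk | hk | hk
  · left; rw [List.getElem?_append_left hk] at h; exact h
  · right; subst hk
    rw [List.getElem?_concat_length] at h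
    exact ⟨rfl, (Option.some.inj h).symm⟩
  · exfalso
    rw [List.getElem?_eq_none (by simp; omega)] at h
    exact (nomatch h)

theorem matches_append {α β : List (Event n S)} {j k : ℕ} {r : S.Res}
    (h : Matches α j k r) : Matches (α ++ β) j k r := by
  obtain ⟨i, op, hj, hk, hjk, hmid⟩ := h
  have hklen : k < α.length := by
    by_contra hx
    rw [List.getElem?_eq_none (Nat.le_of_not_lt hx)] at hk
    exact (nomatch hk)
  refine ⟨i, op, getElem?_append_of_some hj β, getElem?_append_of_some hk β, hjk, ?_⟩
  intro m hm1 hm2 r'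
  rw [List.getElem?_append_left (lt_trans hm2 hklen)]
  exact hmid m hm1 hm2 r'

theorem getElem?_some_lt {β : Type*} {l : List β} {k : ℕ} {x : β}
    (h : l[k]? = some x) : k < l.length := by
  by_contra hk
  rw [List.getElem?_eq_none (Nat.le_of_not_lt hk)] at h
  exact (nomatch h)

end ListHelpers


section Phi

variable {n : ℕ} {ι : Type} {M : ι → BaseObject} {A : Impl n (LLContestSpec n) ι M}

/-- Structural invariant of executions of an implementation of the long-lived contest
object, for the referee `p` (with `p.val = 0`) and the competitors. -/
def Phi (A : Impl n (LLContestSpec n) ι M) (p : Fin n)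
    (α : List (Event n (LLContestSpec n))) (C : Config A) : Prop :=
  (∀ op, C.pend p = some op → op = ContestOp.decide ∧
      (∃ j : ℕ, α[j]? = some (Event.inv p ContestOp.decide)) ∧
      ∀ (k : ℕ) (r : (LLContestSpec n).Res), α[k]? ≠ some (Event.res p r)) ∧
  (C.pend p = none → C.hist p ≠ [] → ∃ (j k : ℕ) (r : (LLContestSpec n).Res),
      α[j]? = some (Event.inv p ContestOp.decide) ∧
      Matches α j k r ∧ A.ret p (C.loc p) = some r) ∧
  (C.hist p = [] → C.pend p = none ∧
      ∀ k : ℕ, (∀ op, α[k]? ≠ some (Event.inv p op)) ∧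
        (∀ r : (LLContestSpec n).Res, α[k]? ≠ some (Event.res p r))) ∧
  (∀ i : Fin n, i.val ≠ 0 → ∀ op, C.pend i = some op →
      ∃ j : ℕ, α[j]? = some (Event.inv i op) ∧
        ∀ m : ℕ, j < m → ∀ r : (LLContestSpec n).Res, α[m]? ≠ some (Event.res i r))

theorem phi_init (p : Fin n) : Phi A p [] (initConfig A) := by
  refine ⟨?_, ?_, ?_, ?_⟩
  · intro op h; exact (nomatch h)
  · intro _ h; exact absurd rfl h
  · intro _; exact ⟨rfl, fun k => ⟨fun op => by simp, fun r => by simp⟩⟩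
  · intro i _ op h; exact (nomatch h)

theorem phi_snoc {p : Fin n} (hp0 : p.val = 0) {α : List (Event n (LLContestSpec n))}
    {C D : Config A} {e : Event n (LLContestSpec n)}
    (hPhi : Phi A p α C) (h : nextConfig A C e = some D) : Phi A p (α ++ [e]) D := by
  obtain ⟨phi1, phi2, phi3, phi4⟩ := hPhi
  have hlen : (α ++ [e])[α.length]? = some e := List.getElem?_concat_length (l := α) (a := e)
  cases e with
  | inv i op =>
    cases hpend : C.pend i with
    | some op' => simp [nextConfig, hpend] at h
    | none =>
      simp only [nextConfig, hpend] at h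
      split at h
      case isFalse => exact absurd h (by simp)
      case isTrue hall =>
      cases h
      by_cases hip : i = p
      · subst hip
        have hop : op = ContestOp.decide := by
          cases op
          · exfalso; simpa [LLContestSpec, hp0] using hall
          · rfl
        subst hop
        have hhist : C.hist i = [] := by
          simp only [LLContestSpec, hp0, Bool.and_eq_true, beq_iff_eq] at hall
          exact List.isEmpty_iff.mp hall.2
        have hnoev := (phi3 hhist).2
        refine ⟨?_, ?_, ?_, ?_⟩
        · intro op' hop'
          refine ⟨?_, ⟨α.length, hlen⟩, ?_⟩
          · have h' := hop'
            simp only [Function.update_self, Option.some.injEq] at h'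
            exact (Option.some.inj h').symm
          · intro k r hk
            rcases snoc_cases hk with hk | ⟨_, hk⟩
            · exact (hnoev k).2 r hk
            · exact (nomatch hk)
        · intro hnone
          exfalso
          simp [Function.update_self] at hnone
        · intro hh
          exfalso
          simp [Function.update_self] at hh
        · intro i' hi' op' hop'
          have hi'p : i' ≠ i := fun hx => hi' (hx ▸ hp0)
          simp only [Function.update_of_ne hi'p] at hop'
          obtain ⟨j, hj, hnores⟩ := phi4 i' hi' op' hop'
          refine ⟨j, getElem?_append_of_some hj _, ?_⟩
          intro m hm r hcon
          rcases snoc_cases hcon with hcon | ⟨_, hcon⟩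
          · exact hnores m hm r hcon
          · exact (nomatch hcon)
      · have hiv : i.val ≠ 0 := by
          intro hx
          exact hip (Fin.ext (hx.trans hp0.symm))
        refine ⟨?_, ?_, ?_, ?_⟩
        · intro op' hop'
          simp only [Function.update_of_ne (Ne.symm hip)] at hop'
          obtain ⟨h1, ⟨j, hj⟩, h3⟩ := phi1 op' hop'
          refine ⟨h1, ⟨j, getElem?_append_of_some hj _⟩, ?_⟩
          intro k r hk
          rcases snoc_cases hk with hk | ⟨_, hk⟩
          · exact h3 k r hk
          · exact (nomatch hk)
        · intro hnone hne
          simp only [Function.update_of_ne (Ne.symm hip)] at hnone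
          simp only [Function.update_of_ne (Ne.symm hip)] at hne
          obtain ⟨j, k, r, hj, hm, hret⟩ := phi2 hnone hne
          exact ⟨j, k, r, getElem?_append_of_some hj _, matches_append hm,
            by simp only [Function.update_of_ne (Ne.symm hip)]; assumption⟩
        · intro hh
          simp only [Function.update_of_ne (Ne.symm hip)] at hh
          obtain ⟨h1, h2⟩ := phi3 hh
          refine ⟨by simp only [Function.update_of_ne (Ne.symm hip)]; assumption, ?_⟩
          intro k
          constructor
          · intro op' hk
            rcases snoc_cases hk with hk | ⟨_, hk⟩
            · exact (h2 k).1 op' hk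
            · exact hip (by cases hk; rfl)
          · intro r hk
            rcases snoc_cases hk with hk | ⟨_, hk⟩
            · exact (h2 k).2 r hk
            · exact (nomatch hk)
        · intro i' hi' op' hop'
          by_cases hii : i' = i
          · subst hii
            simp only [Function.update_self] at hop'
            cases hop'
            refine ⟨α.length, hlen, ?_⟩
            intro m hm r hcon
            rcases snoc_cases hcon with hcon | ⟨hc1, _⟩
            · exact absurd (getElem?_some_lt hcon) (by omega)
            · omega
          · simp only [Function.update_of_ne hii] at hop'
            obtain ⟨j, hj, hnores⟩ := phi4 i' hi' op' hop'
            refine ⟨j, getElem?_append_of_some hj _, ?_⟩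
            intro m hm r hcon
            rcases snoc_cases hcon with hcon | ⟨_, hcon⟩
            · exact hnores m hm r hcon
            · exact (nomatch hcon)
  | res i r =>
    cases hpend : C.pend i with
    | none => simp [nextConfig, hpend] at h
    | some op' =>
      simp only [nextConfig, hpend] at h
      split at h
      case isFalse => exact absurd h (by simp)
      case isTrue hret =>
      cases h
      by_cases hip : i = p
      · subst hip
        obtain ⟨hop, ⟨j, hj⟩, hnores⟩ := phi1 op' hpend
        refine ⟨?_, ?_, ?_, ?_⟩
        · intro op'' hop''
          exfalso
          simp [Function.update_self] at hop''
        · intro _ _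
          refine ⟨j, α.length, r, getElem?_append_of_some hj _, ?_, hret⟩
          refine ⟨i, ContestOp.decide, getElem?_append_of_some hj _, hlen,
            getElem?_some_lt hj, ?_⟩
          intro m hm1 hm2 r' hcon
          have hmlen : m < α.length := hm2
          rw [List.getElem?_append_left hmlen] at hcon
          exact hnores m r' hcon
        · intro hh
          exfalso
          have := (phi3 hh).1
          rw [this] at hpend
          exact (nomatch hpend)
        · intro i' hi' op'' hop''
          have hi'p : i' ≠ i := fun hx => hi' (hx ▸ hp0)
          simp only [Function.update_of_ne hi'p] at hop''
          obtain ⟨j', hj', hnores'⟩ := phi4 i' hi' op'' hop''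
          refine ⟨j', getElem?_append_of_some hj' _, ?_⟩
          intro m hm rr hcon
          rcases snoc_cases hcon with hcon | ⟨_, hcon⟩
          · exact hnores' m hm rr hcon
          · exact hi'p (by cases hcon; rfl)
      · refine ⟨?_, ?_, ?_, ?_⟩
        · intro op'' hop''
          simp only [Function.update_of_ne (Ne.symm hip)] at hop''
          obtain ⟨h1, ⟨j, hj⟩, h3⟩ := phi1 op'' hop''
          refine ⟨h1, ⟨j, getElem?_append_of_some hj _⟩, ?_⟩
          intro k rr hk
          rcases snoc_cases hk with hk | ⟨_, hk⟩
          · exact h3 k rr hk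
          · exact hip (by cases hk; rfl)
        · intro hnone hne
          simp only [Function.update_of_ne (Ne.symm hip)] at hnone
          obtain ⟨j, k, rr, hj, hm, hret'⟩ := phi2 hnone hne
          exact ⟨j, k, rr, getElem?_append_of_some hj _, matches_append hm, hret'⟩
        · intro hh
          obtain ⟨h1, h2⟩ := phi3 hh
          refine ⟨by simp only [Function.update_of_ne (Ne.symm hip)]; assumption, ?_⟩
          intro k
          constructor
          · intro op'' hk
            rcases snoc_cases hk with hk | ⟨_, hk⟩
            · exact (h2 k).1 op'' hk
            · exact (nomatch hk)
          · intro rr hk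
            rcases snoc_cases hk with hk | ⟨_, hk⟩
            · exact (h2 k).2 rr hk
            · exact hip (by cases hk; rfl)
        · intro i' hi' op'' hop''
          have hii : i' ≠ i := by
            intro hx
            subst hx
            simp only [Function.update_self] at hop''
            exact (nomatch hop'')
          simp only [Function.update_of_ne hii] at hop''
          obtain ⟨j', hj', hnores'⟩ := phi4 i' hi' op'' hop''
          refine ⟨j', getElem?_append_of_some hj' _, ?_⟩
          intro m hm rr hcon
          rcases snoc_cases hcon with hcon | ⟨_, hcon⟩
          · exact hnores' m hm rr hcon
          · exact hii (by cases hcon; rfl)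
  | step i =>
    cases hpend : C.pend i with
    | none => simp [nextConfig, hpend] at h
    | some op' =>
      simp only [nextConfig, hpend] at h
      split at h
      case isFalse => exact absurd h (by simp)
      case isTrue hret =>
      cases h
      refine ⟨?_, ?_, ?_, ?_⟩
      · intro op'' hop''
        obtain ⟨h1, ⟨j, hj⟩, h3⟩ := phi1 op'' hop''
        refine ⟨h1, ⟨j, getElem?_append_of_some hj _⟩, ?_⟩
        intro k rr hk
        rcases snoc_cases hk with hk | ⟨_, hk⟩
        · exact h3 k rr hk
        · exact (nomatch hk)
      · intro hnone hne
        by_cases hip : i = p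
        · subst hip
          rw [hnone] at hpend
          exact (nomatch hpend)
        · obtain ⟨j, k, rr, hj, hm, hret'⟩ := phi2 hnone hne
          refine ⟨j, k, rr, getElem?_append_of_some hj _, matches_append hm, ?_⟩
          simp only [Function.update_of_ne (Ne.symm hip)]; assumption
      · intro hh
        obtain ⟨h1, h2⟩ := phi3 hh
        refine ⟨h1, ?_⟩
        intro k
        constructor
        · intro op'' hk
          rcases snoc_cases hk with hk | ⟨_, hk⟩
          · exact (h2 k).1 op'' hk
          · exact (nomatch hk)
        · intro rr hk
          rcases snoc_cases hk with hk | ⟨_, hk⟩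
          · exact (h2 k).2 rr hk
          · exact (nomatch hk)
      · intro i' hi' op'' hop''
        obtain ⟨j', hj', hnores'⟩ := phi4 i' hi' op'' hop''
        refine ⟨j', getElem?_append_of_some hj' _, ?_⟩
        intro m hm rr hcon
        rcases snoc_cases hcon with hcon | ⟨_, hcon⟩
        · exact hnores' m hm rr hcon
        · exact (nomatch hcon)

theorem phi_exec {p : Fin n} (hp0 : p.val = 0) :
    ∀ (α : List (Event n (LLContestSpec n))) {C : Config A},
      execConfig A α = some C → Phi A p α C := by
  intro α
  induction α using List.reverseRecOn with
  | nil =>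
    intro C hC
    have : C = initConfig A := by
      unfold execConfig at hC
      simpa using hC.symm
    rw [this]
    exact phi_init p
  | append_singleton α e ih =>
    intro C hC
    rw [execConfig_snoc] at hC
    rcases Option.bind_eq_some_iff.mp hC with ⟨C₁, h₁, h₂⟩
    exact phi_snoc hp0 (ih h₁) h₂

end Phi


section PrefE

variable {n : ℕ} {S : Spec n}

theorem prefE_zero (E : ℕ → Event n S) : prefE E 0 = [] := rfl

theorem prefE_succ (E : ℕ → Event n S) (m : ℕ) :
    prefE E (m + 1) = prefE E m ++ [E m] := by
  unfold prefE
  rw [List.range_succ, List.map_append]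
  rfl

theorem prefE_length (E : ℕ → Event n S) (m : ℕ) : (prefE E m).length = m := by
  simp [prefE]

theorem prefE_getElem? (E : ℕ → Event n S) {k m : ℕ} (h : k < m) :
    (prefE E m)[k]? = some (E k) := by
  simp [prefE, List.getElem?_range h]

theorem prefE_prefix (E : ℕ → Event n S) {m m' : ℕ} (h : m ≤ m') :
    ∃ δ, prefE E m' = prefE E m ++ δ := by
  induction m' with
  | zero =>
    have : m = 0 := Nat.le_zero.mp h
    subst this
    exact ⟨[], rfl⟩
  | succ m' ih =>
    rcases Nat.lt_or_ge m (m' + 1) with hlt | hge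
    · obtain ⟨δ, hδ⟩ := ih (by omega)
      exact ⟨δ ++ [E m'], by rw [prefE_succ, hδ, List.append_assoc]⟩
    · have : m = m' + 1 := by omega
      subst this
      exact ⟨[], by simp⟩

theorem prefE_mem {E : ℕ → Event n S} {m : ℕ} {e : Event n S}
    (h : e ∈ prefE E m) : ∃ t, t < m ∧ e = E t := by
  unfold prefE at h
  rcases List.mem_map.mp h with ⟨t, ht, rfl⟩
  exact ⟨t, List.mem_range.mp ht, rfl⟩

/-- An infinite schedule that first replays `α` and then follows `E`. -/
noncomputable def glue (α : List (Event n S)) (E : ℕ → Event n S) : ℕ → Event n S :=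
  fun m => if h : m < α.length then α.get ⟨m, h⟩ else E (m - α.length)

theorem glue_ge {α : List (Event n S)} {E : ℕ → Event n S} {m : ℕ} (h : α.length ≤ m) :
    glue α E m = E (m - α.length) := by
  unfold glue
  rw [dif_neg (by omega)]

theorem prefE_glue_le {α : List (Event n S)} {E : ℕ → Event n S} {m : ℕ}
    (h : m ≤ α.length) : prefE (glue α E) m = α.take m := by
  induction m with
  | zero => simp [prefE_zero]
  | succ m ih =>
    rw [prefE_succ, ih (by omega), List.take_succ]
    have hm : m < α.length := by omega
    rw [List.getElem?_eq_getElem hm]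
    congr 1
    simp [glue, dif_pos hm]

theorem prefE_glue_ge {α : List (Event n S)} {E : ℕ → Event n S} {m : ℕ}
    (h : α.length ≤ m) : prefE (glue α E) m = α ++ prefE E (m - α.length) := by
  induction m with
  | zero =>
    have h0 : α.length = 0 := by omega
    rw [List.length_eq_zero_iff.mp h0]
    simp [prefE_zero]
  | succ m ih =>
    rcases Nat.lt_or_ge m α.length with hlt | hge
    · have hm : m + 1 = α.length := by omega
      rw [prefE_glue_le (by omega), hm]
      simp [List.take_length, prefE_zero]
    · rw [prefE_succ, ih hge, glue_ge (by omega)]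
      have : m + 1 - α.length = (m - α.length) + 1 := by omega
      rw [this, prefE_succ, List.append_assoc]

end PrefE

section Run

variable {n : ℕ} {ι : Type} {M : ι → BaseObject} {A : Impl n (LLContestSpec n) ι M}

theorem llNextEvent_proc (C : Config A) (r : Fin n) : (llNextEvent A C r).proc = r := by
  unfold llNextEvent
  cases C.pend r with
  | none => rfl
  | some op =>
    cases A.ret r (C.loc r) with
    | none => rfl
    | some v => rfl

theorem llNext_enabled (C : Config A) {q : Fin n} (hq : q.val ≠ 0) :
    (nextConfig A C (llNextEvent A C q)).isSome := by
  cases hp : C.pend q with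
  | none =>
    have he : llNextEvent A C q = Event.inv q ContestOp.compete := by
      unfold llNextEvent
      rw [hp]
      simp [hq]
    have hall : (LLContestSpec n).allowed q (C.hist q) ContestOp.compete = true := by
      simp [LLContestSpec]
      exact fun hx => absurd hx hq
    rw [he]
    simp [nextConfig, hp, hall]
  | some op =>
    cases hr : A.ret q (C.loc q) with
    | some v =>
      have he : llNextEvent A C q = Event.res q v := by
        unfold llNextEvent
        rw [hp, hr]
      rw [he]
      simp [nextConfig, hp, hr]
    | none =>
      have he : llNextEvent A C q = Event.step q := by
        unfold llNextEvent
        rw [hp, hr]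
      rw [he]
      simp [nextConfig, hp, hr]

variable (A) in
/-- The configurations along the solo run of competitor `q` from `C0`. -/
noncomputable def qcfg (C0 : Config A) (q : Fin n) : ℕ → Config A
  | 0 => C0
  | m + 1 =>
    (nextConfig A (qcfg C0 q m) (llNextEvent A (qcfg C0 q m) q)).getD (qcfg C0 q m)

variable (A) in
/-- The events of the solo run of competitor `q` from `C0`. -/
noncomputable def qev (C0 : Config A) (q : Fin n) (m : ℕ) : Event n (LLContestSpec n) :=
  llNextEvent A (qcfg A C0 q m) q

theorem qev_proc (C0 : Config A) (q : Fin n) (m : ℕ) : (qev A C0 q m).proc = q :=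
  llNextEvent_proc _ q

theorem qcfg_succ (C0 : Config A) {q : Fin n} (hq : q.val ≠ 0) (m : ℕ) :
    nextConfig A (qcfg A C0 q m) (qev A C0 q m) = some (qcfg A C0 q (m + 1)) := by
  have h := llNext_enabled (qcfg A C0 q m) hq
  show nextConfig A (qcfg A C0 q m) (llNextEvent A (qcfg A C0 q m) q) = _
  rw [show qcfg A C0 q (m+1)
      = (nextConfig A (qcfg A C0 q m) (llNextEvent A (qcfg A C0 q m) q)).getD
          (qcfg A C0 q m) from rfl]
  cases hx : nextConfig A (qcfg A C0 q m) (llNextEvent A (qcfg A C0 q m) q) with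
  | none => rw [hx] at h; exact absurd h (by simp)
  | some D => rfl

theorem qcfg_exec {α : List (Event n (LLContestSpec n))} {C0 : Config A}
    (hC0 : execConfig A α = some C0) {q : Fin n} (hq : q.val ≠ 0) (m : ℕ) :
    execConfig A (α ++ prefE (qev A C0 q) m) = some (qcfg A C0 q m) := by
  induction m with
  | zero => simpa [prefE_zero, qcfg] using hC0
  | succ m ih =>
    rw [prefE_succ, ← List.append_assoc, execConfig_snoc, ih]
    simpa using qcfg_succ C0 hq m

end Run


section WFuse

variable {n : ℕ} {ι : Type} {M : ι → BaseObject} {A : Impl n (LLContestSpec n) ι M}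

theorem foldlM_snoc {S : Spec n} {A : Impl n S ι M} (γ : List (Event n S)) (e : Event n S)
    (C : Config A) :
    (γ ++ [e]).foldlM (fun C e => nextConfig A C e) C
      = (γ.foldlM (fun C e => nextConfig A C e) C).bind (fun D => nextConfig A D e) := by
  rw [List.foldlM_append]
  cases γ.foldlM (fun C e => nextConfig A C e) C with
  | none => rfl
  | some D =>
    simp only [Option.bind_some, List.foldlM_cons, List.foldlM_nil]
    cases h : nextConfig A D e <;> simp [h]

theorem isExec_take {S : Spec n} {A : Impl n S ι M} {α : List (Event n S)}
    (h : IsExec A α) (m : ℕ) : IsExec A (α.take m) :=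
  isExec_prefix (α := α.take m) (β := α.drop m) (by rwa [List.take_append_drop])

theorem prefE_const {S : Spec n} (e : Event n S) (m : ℕ) :
    prefE (fun _ => e) m = List.replicate m e := by
  induction m with
  | zero => rfl
  | succ m ih => rw [prefE_succ, ih, ← List.replicate_succ']

theorem llNextEvent_pend_some {C : Config A} {r : Fin n} {op : (LLContestSpec n).Op}
    (h : C.pend r = some op) :
    (∃ v, A.ret r (C.loc r) = some v ∧ llNextEvent A C r = Event.res r v) ∨
    (A.ret r (C.loc r) = none ∧ llNextEvent A C r = Event.step r) := by
  unfold llNextEvent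
  rw [h]
  cases hr : A.ret r (C.loc r) with
  | none => exact Or.inr ⟨rfl, rfl⟩
  | some v => exact Or.inl ⟨v, rfl, rfl⟩

theorem llNextEvent_pend_none {C : Config A} {r : Fin n} (h : C.pend r = none)
    (hr : r.val ≠ 0) : llNextEvent A C r = Event.inv r ContestOp.compete := by
  unfold llNextEvent
  rw [h]
  simp [hr]

/-- In the solo run of competitor `q`, responses occur infinitely often. -/
theorem qev_res_infinite (hWF : WaitFree A) {α : List (Event n (LLContestSpec n))}
    {C0 : Config A} (hC0 : execConfig A α = some C0) {q : Fin n} (hq : q.val ≠ 0) :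
    ∀ m, ∃ m', m ≤ m' ∧ ∃ v, qev A C0 q m' = Event.res q v := by
  have hexα : IsExec A α := by unfold IsExec; rw [hC0]; rfl
  have hexec : ∀ m, IsExec A (prefE (glue α (qev A C0 q)) m) := by
    intro m
    rcases le_or_gt m α.length with h | h
    · rw [prefE_glue_le h]; exact isExec_take hexα m
    · rw [prefE_glue_ge (le_of_lt h)]
      unfold IsExec
      rw [qcfg_exec hC0 hq]
      rfl
  intro m
  by_cases hstep : ∀ m₀, ∃ m', m₀ ≤ m' ∧ qev A C0 q m' = Event.step q
  · have hsteps : ∀ m₀, ∃ m', m₀ ≤ m' ∧ glue α (qev A C0 q) m' = Event.step q := by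
      intro m₀
      obtain ⟨m', hm', hstepq⟩ := hstep m₀
      refine ⟨α.length + m', by omega, ?_⟩
      rw [glue_ge (by omega)]
      simpa using hstepq
    obtain ⟨m', hm', v, hv⟩ := hWF _ hexec q hsteps (α.length + m)
    refine ⟨m' - α.length, by omega, v, ?_⟩
    rw [glue_ge (by omega)] at hv
    exact hv
  · push_neg at hstep
    obtain ⟨m₀, hm₀⟩ := hstep
    cases hp : (qcfg A C0 q (max m m₀)).pend q with
    | some op =>
      rcases llNextEvent_pend_some hp with ⟨v, _, hres⟩ | ⟨_, hstepev⟩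
      · exact ⟨max m m₀, le_max_left _ _, v, hres⟩
      · exact absurd hstepev (hm₀ _ (le_max_right _ _))
    | none =>
      have hinv : qev A C0 q (max m m₀) = Event.inv q ContestOp.compete :=
        llNextEvent_pend_none hp hq
      have hstepM := qcfg_succ C0 hq (max m m₀)
      rw [show qev A C0 q (max m m₀) = llNextEvent A (qcfg A C0 q (max m m₀)) q from rfl]
        at hinv
      rw [show qev A C0 q (max m m₀) = llNextEvent A (qcfg A C0 q (max m m₀)) q from rfl,
        hinv] at hstepM
      have hpend1 : (qcfg A C0 q (max m m₀ + 1)).pend q = some ContestOp.compete := by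
        simp only [nextConfig, hp] at hstepM
        split at hstepM
        · have h3 := Option.some.inj hstepM
          rw [← h3]
          simp [Function.update_self]; rfl
        · exact absurd hstepM (by simp)
      rcases llNextEvent_pend_some hpend1 with ⟨v, _, hres⟩ | ⟨_, hstepev⟩
      · exact ⟨max m m₀ + 1, by omega, v, hres⟩
      · exact absurd hstepev (hm₀ _ (by omega))

variable (A) in
/-- The configurations along the solo run of steps of `p` from `C0`. -/
noncomputable def pcfg (C0 : Config A) (p : Fin n) : ℕ → Config A
  | 0 => C0
  | k + 1 => (nextConfig A (pcfg C0 p k) (Event.step p)).getD (pcfg C0 p k)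

theorem pcfg_good {C0 : Config A} {p : Fin n} {op : (LLContestSpec n).Op}
    (hpend : C0.pend p = some op) :
    ∀ k, (∀ j, j < k → A.ret p ((pcfg A C0 p j).loc p) = none) →
      (List.replicate k (Event.step p)).foldlM (fun C e => nextConfig A C e) C0
          = some (pcfg A C0 p k) ∧ (pcfg A C0 p k).pend p = some op := by
  intro k
  induction k with
  | zero => exact fun _ => ⟨rfl, hpend⟩
  | succ k ih =>
    intro hnone
    obtain ⟨hfold, hpendk⟩ := ih (fun j hj => hnone j (by omega))
    have hretk := hnone k (by omega)
    have hstep : nextConfig A (pcfg A C0 p k) (Event.step p) = some (pcfg A C0 p (k + 1)) := by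
      show _ = some ((nextConfig A (pcfg A C0 p k) (Event.step p)).getD (pcfg A C0 p k))
      simp only [nextConfig, hpendk, hretk, if_pos]
      rfl
    constructor
    · rw [List.replicate_succ', foldlM_snoc, hfold]
      simpa using hstep
    · have h2 := hstep
      simp only [nextConfig, hpendk, hretk, if_pos] at h2
      have h3 := Option.some.inj h2
      rw [← h3]
      exact hpendk

/-- If `p` has a pending operation, running `p` solo completes it (by wait-freedom). -/
theorem p_completes (hWF : WaitFree A) {β : List (Event n (LLContestSpec n))}
    {C0 : Config A} (hC0 : execConfig A β = some C0) {p : Fin n}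
    {op : (LLContestSpec n).Op} (hpend : C0.pend p = some op) :
    ∃ (k : ℕ) (v : (LLContestSpec n).Res) (D : Config A),
      (List.replicate k (Event.step p) ++ [Event.res p v]).foldlM
          (fun C e => nextConfig A C e) C0 = some D := by
  classical
  have hexβ : IsExec A β := by unfold IsExec; rw [hC0]; rfl
  by_cases hall : ∀ k, A.ret p ((pcfg A C0 p k).loc p) = none
  · exfalso
    have hexec : ∀ m, IsExec A (prefE (glue β (fun _ => Event.step p)) m) := by
      intro m
      rcases le_or_gt m β.length with h | h
      · rw [prefE_glue_le h]; exact isExec_take hexβ m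
      · rw [prefE_glue_ge (le_of_lt h), prefE_const]
        unfold IsExec
        rw [execConfig_append, hC0]
        simp only [Option.bind_some]
        rw [(pcfg_good hpend (m - β.length) (fun j _ => hall j)).1]
        rfl
    have hsteps : ∀ m, ∃ m', m ≤ m' ∧ glue β (fun _ => Event.step p) m' = Event.step p := by
      intro m
      refine ⟨β.length + m, by omega, ?_⟩
      rw [glue_ge (by omega)]
    obtain ⟨m', hm', r, hr⟩ := hWF _ hexec p hsteps β.length
    rw [glue_ge hm'] at hr
    exact (nomatch hr)
  · push_neg at hall
    have hfind : ∃ k, A.ret p ((pcfg A C0 p k).loc p) ≠ none := hall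
    set k₀ := Nat.find hfind with hk₀def
    have hk₀ := Nat.find_spec hfind
    have hmin : ∀ j, j < k₀ → A.ret p ((pcfg A C0 p j).loc p) = none := by
      intro j hj
      have := Nat.find_min hfind hj
      simpa using this
    obtain ⟨hfold, hpendk⟩ := pcfg_good hpend k₀ hmin
    cases hret : A.ret p ((pcfg A C0 p k₀).loc p) with
    | none => exact absurd hret hk₀
    | some v =>
      refine ⟨k₀, v,
        { pcfg A C0 p k₀ with pend := Function.update (pcfg A C0 p k₀).pend p none }, ?_⟩
      rw [foldlM_snoc, hfold]
      simp only [Option.bind_some]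
      simp only [nextConfig, hpendk, hret, if_pos]

end WFuse


section Lin

variable {n : ℕ}

theorem seqRun_mem {S : Spec n} :
    ∀ {s : S.State} {l : List (Fin n × S.Op × S.Res)} (_ : SeqRun S s l)
      {e : Fin n × S.Op × S.Res}, e ∈ l → ∃ s₁ s₂, S.δ s₁ e.1 e.2.1 s₂ e.2.2 := by
  intro s l hrun
  induction hrun with
  | nil => intro e he; exact absurd he List.not_mem_nil
  | cons hδ htail ih =>
    intro e he
    rcases List.mem_cons.mp he with rfl | he
    · exact ⟨_, _, hδ⟩
    · exact ih he

theorem llc_delta_decide {s s' : (LLContestSpec n).State} {i : Fin n}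
    {r : (LLContestSpec n).Res}
    (h : (LLContestSpec n).δ s i ContestOp.decide s' r) :
    i.val = 0 ∧ ∃ x, r = some x ∧ ∀ j : Fin n, j.val ≠ 0 → s.1 j ≤ x := by
  rcases h with ⟨hop, _⟩ | ⟨_, hi, _, _, _, x, hr, hb⟩
  · exact absurd hop (by simp)
  · exact ⟨hi, x, hr, hb⟩

/-- In a linearization, a pending/complete `decide` of the referee is recorded with a
`some` output. -/
theorem lin_decide_some {α : List (Event n (LLContestSpec n))}
    {σ : List (ℕ × (LLContestSpec n).Res)} (hL : IsLinearization (LLContestSpec n) α σ)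
    {j : ℕ} {r : (LLContestSpec n).Res} {p : Fin n}
    (hj : α[j]? = some (Event.inv p ContestOp.decide)) (hmem : (j, r) ∈ σ) :
    ∃ x : ℕ, r = some x := by
  obtain ⟨l, hF2, hrun⟩ := hL.valid
  obtain ⟨t, hlt, hget⟩ := List.getElem_of_mem hmem
  have hlen := hF2.length_eq
  have hrel := hF2.get (i := t) (by omega) (by omega)
  rcases hrel with ⟨hinv, hres⟩
  simp only [List.get_eq_getElem, hget] at hinv hres
  rw [hj] at hinv
  have hinj := Option.some.inj hinv
  injection hinj with h1 h2
  have hm : l[t] ∈ l := List.getElem_mem _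
  obtain ⟨s₁, s₂, hδ⟩ := seqRun_mem hrun hm
  rw [← h2] at hδ
  obtain ⟨_, x, hx, _⟩ := llc_delta_decide hδ
  exact ⟨x, hres.trans hx⟩

/-- Counting: if a `decide` with output `x` appears in a valid sequential run, then at
most `x` operations of competitor `q` precede it. -/
theorem seqrun_decide_count {q : Fin n} (hq : q.val ≠ 0) :
    ∀ (l₁ : List (Fin n × (LLContestSpec n).Op × (LLContestSpec n).Res))
      (s : (LLContestSpec n).State) (i₀ : Fin n) (x : ℕ)
      (l₂ : List (Fin n × (LLContestSpec n).Op × (LLContestSpec n).Res)),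
      SeqRun (LLContestSpec n) s
        (l₁ ++ ((i₀, ContestOp.decide, some x) :
            Fin n × (LLContestSpec n).Op × (LLContestSpec n).Res) :: l₂) →
      s.1 q + l₁.countP (fun a => decide (a.1 = q)) ≤ x := by
  intro l₁
  induction l₁ with
  | nil =>
    intro s i₀ x l₂ hrun
    rw [List.nil_append] at hrun
    cases hrun with
    | cons hδ htail =>
      obtain ⟨_, x', hx', hb⟩ := llc_delta_decide hδ
      cases Option.some.inj hx'
      simpa using hb q hq
  | cons a l₁ ih =>
    obtain ⟨i, op, r⟩ := a
    intro s i₀ x l₂ hrun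
    rw [List.cons_append] at hrun
    cases hrun with
    | cons hδ htail =>
      have step := ih _ i₀ x l₂ htail
      rw [List.countP_cons]
      rcases hδ with ⟨_, hi, hs', _⟩ | ⟨_, hi0, _, _, hs1, _⟩
      · -- compete by i
        by_cases hiq : i = q
        · subst hiq
          rw [hs'] at step
          simp only [Function.update_self] at step
          have hd : (decide ((i, op, r).1 = i) : Bool) = true := by simp
          rw [hd, if_pos rfl]
          omega
        · rw [hs'] at step
          simp only [Function.update_of_ne (Ne.symm hiq)] at step
          have hd : (decide ((i, op, r).1 = q) : Bool) = false := by simp [hiq]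
          rw [hd, if_neg (by simp)]
          omega
      · -- decide by i (so i ≠ q)
        have hiq : i ≠ q := fun hx => hq (hx ▸ hi0)
        rw [hs1] at step
        have hd : (decide ((i, op, r).1 = q) : Bool) = false := by simp [hiq]
        rw [hd, if_neg (by simp)]
        omega

theorem countP_le_of_forall₂ {γ δ : Type*} {R : γ → δ → Prop} {P : γ → Bool} {Q : δ → Bool} :
    ∀ {l₁ : List γ} {l₂ : List δ}, List.Forall₂ R l₁ l₂ → (∀ a b, R a b → P a → Q b) →
      l₁.countP P ≤ l₂.countP Q := by
  intro l₁ l₂ h himp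
  induction h with
  | nil => simp
  | @cons a b l₁' l₂' hR hF ih =>
    rw [List.countP_cons, List.countP_cons]
    by_cases hPa : P a = true
    · rw [hPa, himp a b hR hPa]
      omega
    · have h1 : P a = false := eq_false_of_ne_true hPa
      rw [h1, if_neg (by simp)]
      cases hQ : Q b with
      | false => rw [if_neg (by simp [hQ])]; omega
      | true => rw [if_pos (by simp [hQ])]; omega

theorem card_le_countP {γ : Type*} (l : List γ) (f : γ → ℕ) (J : Finset ℕ)
    (hJ : ∀ j ∈ J, ∃ a ∈ l, f a = j) :
    J.card ≤ l.countP (fun a => decide (f a ∈ J)) := by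
  classical
  have hsub : J ⊆ ((l.filter (fun a => decide (f a ∈ J))).map f).toFinset := by
    intro j hj
    obtain ⟨a, ha, rfl⟩ := hJ j hj
    rw [List.mem_toFinset]
    exact List.mem_map_of_mem (f := f) (List.mem_filter.mpr ⟨ha, by simpa using hj⟩)
  calc J.card ≤ ((l.filter (fun a => decide (f a ∈ J))).map f).toFinset.card :=
        Finset.card_le_card hsub
    _ ≤ ((l.filter (fun a => decide (f a ∈ J))).map f).length := List.toFinset_card_le _
    _ = (l.filter (fun a => decide (f a ∈ J))).length := List.length_map _
    _ = l.countP (fun a => decide (f a ∈ J)) := List.countP_eq_length_filter.symm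

theorem forall₂_getElem? {γ δ : Type*} {R : γ → δ → Prop} :
    ∀ {l₁ : List γ} {l₂ : List δ}, List.Forall₂ R l₁ l₂ → ∀ {i : ℕ} {a : γ},
      l₁[i]? = some a → ∃ b, l₂[i]? = some b ∧ R a b := by
  intro l₁ l₂ h
  induction h with
  | nil => intro i a ha; simp at ha
  | @cons a' b' l₁' l₂' hR hF ih =>
    intro i a ha
    cases i with
    | zero =>
      simp only [List.getElem?_cons_zero, Option.some.injEq] at ha
      subst ha
      exact ⟨b', by simp, hR⟩
    | succ i =>
      simp only [List.getElem?_cons_succ] at ha ⊢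
      exact ih ha

theorem nodup_fst_unique {β : Type*} {σ : List (ℕ × β)} (h : (σ.map Prod.fst).Nodup)
    {a : ℕ} {b c : β} (h1 : (a, b) ∈ σ) (h2 : (a, c) ∈ σ) : b = c := by
  induction σ with
  | nil => exact absurd h1 List.not_mem_nil
  | cons d σ ih =>
    rw [List.map_cons, List.nodup_cons] at h
    rcases List.mem_cons.mp h1 with rfl | h1'
    · rcases List.mem_cons.mp h2 with h2' | h2'
      · have := congrArg Prod.snd h2'
        simpa using this.symm
      · exfalso
        exact h.1 (List.mem_map.mpr ⟨(a, c), h2', rfl⟩)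
    · rcases List.mem_cons.mp h2 with rfl | h2'
      · exfalso
        exact h.1 (List.mem_map.mpr ⟨(a, b), h1', rfl⟩)
      · exact ih h.2 h1' h2'

end Lin


section ResMatches

variable {n : ℕ} {ι : Type} {M : ι → BaseObject} {A : Impl n (LLContestSpec n) ι M}

theorem getElem?_take_eq {β : Type*} {l : List β} {k j : ℕ} (h : j < k) :
    (l.take k)[j]? = l[j]? := by
  rw [List.getElem?_take]
  rw [if_pos h]

/-- Every response event of a competitor `q` in an execution is matched by an
invocation, yielding a complete operation. -/
theorem matches_of_res {p : Fin n} (hp0 : p.val = 0) {q : Fin n} (hq : q.val ≠ 0)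
    {ω : List (Event n (LLContestSpec n))} (hex : IsExec A ω) {k : ℕ}
    {v : (LLContestSpec n).Res} (hk : ω[k]? = some (Event.res q v)) :
    ∃ (j : ℕ) (op : (LLContestSpec n).Op), j < k ∧ ω[j]? = some (Event.inv q op) ∧
      Matches ω j k v := by
  have hklen : k < ω.length := getElem?_some_lt hk
  -- the execution up to position k
  obtain ⟨Ck, hCk⟩ : ∃ Ck, execConfig A (ω.take k) = some Ck := by
    have h1 : IsExec A (ω.take k) := isExec_take hex k
    cases hc : execConfig A (ω.take k) with
    | none => unfold IsExec at h1; rw [hc] at h1; exact absurd h1 (by simp)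
    | some C => exact ⟨C, rfl⟩
  -- the event at position k is enabled in Ck
  have hexk1 : IsExec A (ω.take (k + 1)) := isExec_take hex (k + 1)
  have htake1 : ω.take (k + 1) = ω.take k ++ [Event.res q v] := by
    rw [List.take_succ, List.getElem?_eq_getElem hklen]
    have : ω[k] = Event.res q v := by
      have := List.getElem?_eq_getElem hklen
      rw [hk] at this
      exact (Option.some.inj this).symm
    rw [this]
    rfl
  have henb : ∃ D, nextConfig A Ck (Event.res q v) = some D := by
    unfold IsExec at hexk1
    rw [htake1, execConfig_snoc, hCk, Option.bind_some] at hexk1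
    cases hc : nextConfig A Ck (Event.res q v) with
    | none => rw [hc] at hexk1; exact absurd hexk1 (by simp)
    | some D => exact ⟨D, rfl⟩
  obtain ⟨D, hD⟩ := henb
  have hpend : ∃ op, Ck.pend q = some op := by
    cases hc : Ck.pend q with
    | none => simp [nextConfig, hc] at hD
    | some op => exact ⟨op, rfl⟩
  obtain ⟨op, hpend⟩ := hpend
  have hphi := (phi_exec (A := A) hp0 (ω.take k) hCk).2.2.2 q hq op hpend
  obtain ⟨j, hj, hnores⟩ := hphi
  have hjk : j < k := by
    have := getElem?_some_lt hj
    rw [List.length_take] at this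
    omega
  refine ⟨j, op, hjk, ?_, ?_⟩
  · rw [← getElem?_take_eq hjk]
    exact hj
  · refine ⟨q, op, by rw [← getElem?_take_eq hjk]; exact hj, hk, hjk, ?_⟩
    intro m hm1 hm2 r' hcon
    refine hnores m hm1 r' ?_
    rw [getElem?_take_eq hm2]
    exact hcon

end ResMatches


section MainAux

variable {n : ℕ} {ι : Type} {M : ι → BaseObject} {A : Impl n (LLContestSpec n) ι M}

/-- The referee's `decide`, invoked in `αx`, is completed by the response at the end of
`αx ++ β ++ γ` where `β` consists of events of competitor `q` and `γ` of `p`'s final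
steps and response. -/
theorem decide_matches_aux {p q : Fin n} (hp0 : p.val = 0) (hq : q.val ≠ 0)
    (αx β γ : List (Event n (LLContestSpec n)))
    {E : ℕ → Event n (LLContestSpec n)} {m₁ k₀ : ℕ} {v : (LLContestSpec n).Res}
    (hβ : β = prefE E m₁) (hEproc : ∀ t, (E t).proc = q)
    (hγ : γ = List.replicate k₀ (Event.step p) ++ [Event.res p v])
    {jh : ℕ} (hjh : αx[jh]? = some (Event.inv p ContestOp.decide))
    (hnores : ∀ (k : ℕ) (r : (LLContestSpec n).Res), αx[k]? ≠ some (Event.res p r)) :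
    Matches ((αx ++ β) ++ γ) jh ((αx ++ β).length + k₀) v := by
  have hqp : p ≠ q := fun h => hq (h ▸ hp0)
  have hjhlen : jh < αx.length := getElem?_some_lt hjh
  have hβlen : β.length = m₁ := by rw [hβ]; exact prefE_length E m₁
  have hγres : γ[k₀]? = some (Event.res p v) := by
    have h1 := List.getElem?_concat_length (l := List.replicate k₀ (Event.step p)) (a := Event.res p v)
    rw [List.length_replicate] at h1
    rw [hγ]
    exact h1
  have hωres : ((αx ++ β) ++ γ)[(αx ++ β).length + k₀]? = some (Event.res p v) := by
    rw [List.getElem?_append_right (by omega)]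
    have : (αx ++ β).length + k₀ - (αx ++ β).length = k₀ := by omega
    rw [this]
    exact hγres
  refine ⟨p, ContestOp.decide,
    getElem?_append_of_some (getElem?_append_of_some hjh β) γ, hωres, ?_, ?_⟩
  · have : αx.length ≤ (αx ++ β).length := by rw [List.length_append]; omega
    omega
  · intro m hm1 hm2 r' hcon
    rcases lt_or_ge m (αx ++ β).length with hmlt | hmge
    · rw [List.getElem?_append_left hmlt] at hcon
      rcases lt_or_ge m αx.length with hmlt2 | hmge2
      · rw [List.getElem?_append_left hmlt2] at hcon
        exact hnores m r' hcon
      · rw [List.getElem?_append_right hmge2] at hcon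
        have hidx : m - αx.length < m₁ := by
          rw [List.length_append, hβlen] at hmlt
          omega
        rw [hβ, prefE_getElem? E hidx] at hcon
        have hproc := hEproc (m - αx.length)
        rw [Option.some.inj hcon] at hproc
        simp only [Event.proc] at hproc
        exact hqp hproc
    · rw [List.getElem?_append_right hmge] at hcon
      have hidx : m - (αx ++ β).length < k₀ := by omega
      rw [hγ, List.getElem?_append_left (by rw [List.length_replicate]; exact hidx),
        List.getElem?_replicate, if_pos hidx] at hcon
      exact (nomatch (Option.some.inj hcon))

end MainAux

/-- (Lemma `indist`.) Let `A` be a wait-free strongly linearizable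
implementation of the long-lived contest object with prefix-closed linearization
function `L`.  Let `α` be a closed execution that is indistinguishable from an
execution `α'` to the referee `p₀` and to a competitor `q`.
Then `W(α) ∩ W(α') ≠ ∅`. -/
theorem closed_indistinguishable_valencies_intersect :
    ∀ (n : ℕ) (hn : 2 ≤ n) (ι : Type) (M : ι → BaseObject)
      (A : Impl n (LLContestSpec n) ι M)
      (L : List (Event n (LLContestSpec n)) → List (ℕ × (LLContestSpec n).Res)),
      WaitFree A → IsLinFun A L → PrefixClosedLin A L →
      ∀ (α α' : List (Event n (LLContestSpec n))) (q : Fin n), q.val ≠ 0 →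
        IsExec A α → IsExec A α' →
        ClosedExec A L α →
        ExecIndistTo A α α' (⟨0, by omega⟩ : Fin n) →
        ExecIndistTo A α α' q →
        (Wset A L α ∩ Wset A L α').Nonempty := by
  intro n hn ι M A L hWF hLin hPre α α' q hq hExα hExα' hClosed hIndP0 hIndQ
  classical
  have hn0 : 0 < n := by omega
  have hIndP : ExecIndistTo A α α' (⟨0, hn0⟩ : Fin n) := hIndP0
  obtain ⟨Cα, Cα', hCα, hCα', hmem, hlocp, hpendp, hhistp⟩ := hIndP
  obtain ⟨Cα2, Cα2', hCα2, hCα2', hmem2, hlocq, hpendq, hhistq⟩ := hIndQ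
  rw [hCα] at hCα2
  rw [hCα'] at hCα2'
  cases Option.some.inj hCα2
  cases Option.some.inj hCα2'
  set p : Fin n := ⟨0, hn0⟩ with hpdef
  have hp0 : p.val = 0 := rfl
  have hqp : q ≠ p := fun h => hq (by rw [h])
  have hAgree : Agree2 A p q Cα Cα' := ⟨hmem, hlocp, hpendp, hhistp, hlocq, hpendq, hhistq⟩
  have hphiα := phi_exec (A := A) (p := p) hp0 α hCα
  have hphiα' := phi_exec (A := A) (p := p) hp0 α' hCα'
  -- the solo run of q from α
  have hexecE : ∀ m, IsExec A (α ++ prefE (qev A Cα q) m) := fun m => by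
    unfold IsExec
    rw [qcfg_exec hCα hq m]
    rfl
  have hcomp : ∀ m, CompetitorsOnly (prefE (qev A Cα q) m) := by
    intro m e he
    obtain ⟨t, _, rfl⟩ := prefE_mem he
    rw [qev_proc]
    exact hq
  obtain ⟨m₀, x, hDV⟩ := hClosed (qev A Cα q)
    (fun m => by rw [qev_proc]; exact hq) hexecE
  have hDV' := hDV
  obtain ⟨jh, i₀, hi₀, hjhev, hjhmem⟩ := hDV'
  have hi₀p : i₀ = p := Fin.ext (by rw [hi₀])
  subst hi₀p
  have hjhα : α[jh]? = some (Event.inv p ContestOp.decide) := by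
    rcases lt_or_ge jh α.length with hlt | hge
    · rwa [List.getElem?_append_left hlt] at hjhev
    · exfalso
      rw [List.getElem?_append_right hge] at hjhev
      have hlt2 : jh - α.length < m₀ := by
        have h1 := getElem?_some_lt hjhev
        rwa [prefE_length] at h1
      rw [prefE_getElem? _ hlt2] at hjhev
      have hproc := qev_proc Cα q (jh - α.length)
      rw [Option.some.inj hjhev] at hproc
      simp only [Event.proc] at hproc
      exact hq (hproc ▸ hp0)
  have hxWα : x ∈ Wset A L α := ⟨prefE (qev A Cα q) m₀, hcomp m₀, hexecE m₀, hDV⟩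
  by_cases hhist : Cα.hist p = []
  · exact absurd hjhα (((hphiα.2.2.1 hhist).2 jh).1 ContestOp.decide)
  by_cases hpendn : Cα.pend p = none
  · -- decide already completed in α (and in α')
    obtain ⟨j, k, r, hjev, hMat, hret⟩ := hphiα.2.1 hpendn hhist
    have hLα := hLin α hExα
    have hmemσ := hLα.complete_mem j k r hMat
    obtain ⟨x₀, rfl⟩ := lin_decide_some hLα hjev hmemσ
    have hhist' : Cα'.hist p ≠ [] := by rwa [← hhistp]
    have hpendn' : Cα'.pend p = none := by rwa [← hpendp]
    obtain ⟨j', k', r', hjev', hMat', hret'⟩ := hphiα'.2.1 hpendn' hhist'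
    have hr' : r' = some x₀ := by
      rw [← hlocp] at hret'
      rw [hret] at hret'
      exact Option.some.inj hret'.symm
    subst hr'
    have hmemσ' := (hLin α' hExα').complete_mem j' k' (some x₀) hMat'
    refine ⟨x₀, ⟨[], ?_, ?_, ?_⟩, ⟨[], ?_, ?_, ?_⟩⟩
    · exact fun e he => absurd he List.not_mem_nil
    · rwa [List.append_nil]
    · rw [List.append_nil]
      exact ⟨j, p, hp0, hjev, hmemσ⟩
    · exact fun e he => absurd he List.not_mem_nil
    · rwa [List.append_nil]
    · rw [List.append_nil]
      exact ⟨j', p, hp0, hjev', hmemσ'⟩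
  · -- decide pending in α (and in α'): the main case
    obtain ⟨op, hpendop⟩ := Option.ne_none_iff_exists'.mp hpendn
    obtain ⟨hopdec, -, hnoresα⟩ := hphiα.1 op hpendop
    subst hopdec
    have hpendop' : Cα'.pend p = some ContestOp.decide := by rwa [← hpendp]
    obtain ⟨-, ⟨jh', hjh'⟩, hnoresα'⟩ := hphiα'.1 ContestOp.decide hpendop'
    -- infinitely many completed competes of q
    obtain ⟨f, hfle, hfv⟩ :
        ∃ f : ℕ → ℕ, (∀ m, m ≤ f m) ∧ ∀ m, ∃ v, qev A Cα q (f m) = Event.res q v := by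
      choose f h1 h2 using qev_res_infinite hWF hCα hq
      exact ⟨f, h1, h2⟩
    set g : ℕ → ℕ := fun t => Nat.rec (f 0) (fun _ prev => f (prev + 1)) t with hgdef
    have hgres : ∀ t, ∃ v, qev A Cα q (g t) = Event.res q v := by
      intro t
      cases t with
      | zero => exact hfv 0
      | succ t => exact hfv (g t + 1)
    have hgmono : ∀ t, g t < g (t + 1) := by
      intro t
      have h1 := hfle (g t + 1)
      have h2 : g (t + 1) = f (g t + 1) := rfl
      omega
    have hgle : Monotone g := monotone_nat_of_le_succ (fun t => (hgmono t).le)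
    choose vres hvres using hgres
    set m₁ := max m₀ (g x + 1) with hm₁def
    set β := prefE (qev A Cα q) m₁ with hβdef
    have hβexec : IsExec A (α ++ β) := hexecE m₁
    have hexecαβ : execConfig A (α ++ β) = some (qcfg A Cα q m₁) := qcfg_exec hCα hq m₁
    obtain ⟨δ₀, hδ₀⟩ := prefE_prefix (qev A Cα q) (le_max_left m₀ (g x + 1))
    have hprefix1 : L (α ++ prefE (qev A Cα q) m₀) <+: L (α ++ β) := by
      have h1 := hPre (α ++ prefE (qev A Cα q) m₀) δ₀
        (by rw [List.append_assoc, ← hδ₀]; exact hβexec)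
      rwa [List.append_assoc, ← hδ₀] at h1
    have hjhβ : (jh, (some x : Option ℕ)) ∈ L (α ++ β) := hprefix1.subset hjhmem
    -- transfer β to α'
    have hfoldβ : β.foldlM (fun C e => nextConfig A C e) Cα = some (qcfg A Cα q m₁) := by
      have h2 := hexecαβ
      rw [execConfig_append, hCα, Option.bind_some] at h2
      exact h2
    have hβproc : ∀ e ∈ β, e.proc = p ∨ e.proc = q := by
      intro e he
      obtain ⟨t, _, rfl⟩ := prefE_mem he
      right
      exact qev_proc _ _ _
    obtain ⟨Cβ', hfoldβ', hAg1⟩ := agree2_run β Cα Cα' (qcfg A Cα q m₁) hAgree hβproc hfoldβ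
    have hexecα'β : execConfig A (α' ++ β) = some Cβ' := by
      rw [execConfig_append, hCα', Option.bind_some]
      exact hfoldβ'
    have hexα'β : IsExec A (α' ++ β) := by
      unfold IsExec
      rw [hexecα'β]
      rfl
    -- p is still pending after β
    have hpendβ : (qcfg A Cα q m₁).pend p = some ContestOp.decide := by
      have h3 := foldl_other (A := A) (i := p) β Cα _ hfoldβ
        (fun e he => by
          obtain ⟨t, _, rfl⟩ := prefE_mem he
          rw [qev_proc]
          exact hqp)
      rw [h3.2.1, hpendop]; rfl
    -- p completes its decide when run solo
    obtain ⟨k₀, v, Dfin, hγfold⟩ := p_completes hWF hexecαβ hpendβ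
    set γ := List.replicate k₀ (Event.step p) ++ [Event.res p v] with hγdef
    have hγproc : ∀ e ∈ γ, e.proc = p ∨ e.proc = q := by
      intro e he
      rcases List.mem_append.mp he with he | he
      · left
        rw [List.eq_of_mem_replicate he]
        rfl
      · left
        rw [List.mem_singleton.mp he]
        rfl
    have hexecαβγ : execConfig A ((α ++ β) ++ γ) = some Dfin := by
      rw [execConfig_append, hexecαβ, Option.bind_some]
      exact hγfold
    obtain ⟨Dfin', hγfold', hAg2⟩ := agree2_run γ (qcfg A Cα q m₁) Cβ' Dfin hAg1 hγproc hγfold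
    have hexecα'βγ : execConfig A ((α' ++ β) ++ γ) = some Dfin' := by
      rw [execConfig_append, hexecα'β, Option.bind_some]
      exact hγfold'
    have hexαβγ : IsExec A ((α ++ β) ++ γ) := by
      unfold IsExec
      rw [hexecαβγ]
      rfl
    have hexα'βγ : IsExec A ((α' ++ β) ++ γ) := by
      unfold IsExec
      rw [hexecα'βγ]
      rfl
    -- the completed decide matches, with output `v = some x`
    have hMα : Matches ((α ++ β) ++ γ) jh ((α ++ β).length + k₀) v :=
      decide_matches_aux hp0 hq α β γ hβdef (fun t => qev_proc Cα q t) hγdef hjhα hnoresα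
    have hLαβγ := hLin ((α ++ β) ++ γ) hexαβγ
    have hprefix2 : L (α ++ β) <+: L ((α ++ β) ++ γ) := hPre (α ++ β) γ hexαβγ
    have hjhβγ : (jh, (some x : Option ℕ)) ∈ L ((α ++ β) ++ γ) := hprefix2.subset hjhβ
    have hvx : (some x : Option ℕ) = v := hLαβγ.complete_out jh _ v (some x) hMα hjhβγ
    -- the same on the α' side
    have hMα' : Matches ((α' ++ β) ++ γ) jh' ((α' ++ β).length + k₀) v :=
      decide_matches_aux hp0 hq α' β γ hβdef (fun t => qev_proc Cα q t) hγdef hjh' hnoresα'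
    have hLα'βγ := hLin ((α' ++ β) ++ γ) hexα'βγ
    have hmemdec : (jh', (some x : Option ℕ)) ∈ L ((α' ++ β) ++ γ) := by
      rw [hvx]
      exact hLα'βγ.complete_mem jh' _ v hMα'
    have hprefix3 : L (α' ++ β) <+: L ((α' ++ β) ++ γ) := hPre (α' ++ β) γ hexα'βγ
    by_cases hb : ∃ r', (jh', r') ∈ L (α' ++ β)
    · -- the decide is already linearized after α'β
      obtain ⟨r', hr'⟩ := hb
      have hr'mem : (jh', r') ∈ L ((α' ++ β) ++ γ) := hprefix3.subset hr'
      have hr'x : r' = some x := nodup_fst_unique hLα'βγ.nodup hr'mem hmemdec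
      subst hr'x
      refine ⟨x, hxWα, ⟨β, hcomp m₁, hexα'β, ⟨jh', p, hp0, ?_, hr'⟩⟩⟩
      exact getElem?_append_of_some hjh' β
    · -- otherwise the decide would be linearized after x+1 competes of q
      exfalso
      obtain ⟨l, hF2, hrun⟩ := hLα'βγ.valid
      obtain ⟨d, hdlt, hdget⟩ := List.getElem_of_mem hmemdec
      have hlen2 := hF2.length_eq
      have hd2 : d < l.length := by rw [← hlen2]; exact hdlt
      have hdget? : (L ((α' ++ β) ++ γ))[d]? = some (jh', some x) :=
        List.getElem?_eq_some_iff.mpr ⟨hdlt, hdget⟩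
      obtain ⟨e, hld?, hinv2, hres2⟩ := forall₂_getElem? hF2 hdget?
      have hjh'ω : ((α' ++ β) ++ γ)[jh']? = some (Event.inv p ContestOp.decide) :=
        getElem?_append_of_some (getElem?_append_of_some hjh' β) γ
      simp only at hinv2 hres2
      rw [hjh'ω] at hinv2
      injection Option.some.inj hinv2 with hfst hsnd
      have heq : l[d]'hd2 = e := by
        have h7 := List.getElem?_eq_getElem hd2
        rw [hld?] at h7
        exact Option.some.inj h7.symm
      -- split the sequential run at the decide
      have hld : e = ((e.1, ContestOp.decide, (some x : Option ℕ)) :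
          Fin n × (LLContestSpec n).Op × (LLContestSpec n).Res) := by
        rw [hsnd, hres2]
      have hsplit : l = l.take d ++ ((e.1, ContestOp.decide, some x) :
          Fin n × (LLContestSpec n).Op × (LLContestSpec n).Res) :: l.drop (d + 1) := by
        conv_lhs => rw [← List.take_append_drop d l]
        rw [List.drop_eq_getElem_cons hd2, heq, hld]
      rw [hsplit] at hrun
      have hcount1 := seqrun_decide_count hq (l.take d) (LLContestSpec n).init e.1 x
        (l.drop (d + 1)) hrun
      have hinit : (LLContestSpec n).init.1 q = 0 := rfl
      rw [hinit] at hcount1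
      -- the length of L (α' ++ β) is at most d
      have heqtake : L (α' ++ β) = (L ((α' ++ β) ++ γ)).take (L (α' ++ β)).length :=
        List.prefix_iff_eq_take.mp hprefix3
      have hdge : (L (α' ++ β)).length ≤ d := by
        by_contra hc
        push_neg at hc
        refine hb ⟨some x, ?_⟩
        rw [heqtake]
        refine List.mem_of_getElem? (a := ((jh', some x) : ℕ × (LLContestSpec n).Res)) (i := d) ?_
        rw [getElem?_take_eq hc]; exact hdget?
      -- the x+1 competes of q completed during β
      have hresβ : ∀ t, t ≤ x →
          (α' ++ β)[α'.length + g t]? = some (Event.res q (vres t)) := by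
        intro t ht
        rw [List.getElem?_append_right (by omega)]
        have h4 : α'.length + g t - α'.length = g t := by omega
        rw [h4, hβdef, prefE_getElem? _ (by
          have := hgle ht
          omega)]
        rw [hvres t]
      have hMt : ∀ t, t ≤ x → ∃ (j : ℕ) (op : (LLContestSpec n).Op),
          j < α'.length + g t ∧ (α' ++ β)[j]? = some (Event.inv q op) ∧
          Matches (α' ++ β) j (α'.length + g t) (vres t) :=
        fun t ht => matches_of_res hp0 hq hexα'β (hresβ t ht)
      set jf : ℕ → ℕ := fun t => if ht : t ≤ x then (hMt t ht).choose else 0 with hjfdef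
      have hjf : ∀ t, t ≤ x → ∃ op, jf t < α'.length + g t ∧
          (α' ++ β)[jf t]? = some (Event.inv q op) ∧
          Matches (α' ++ β) (jf t) (α'.length + g t) (vres t) := by
        intro t ht
        have h5 := (hMt t ht).choose_spec
        rw [hjfdef]
        simp only [dif_pos ht]
        exact h5
      have hjlt : ∀ t, t + 1 ≤ x → jf t < jf (t + 1) := by
        intro t ht
        obtain ⟨op1, hlt1, hinv1, hM1⟩ := hjf t (by omega)
        obtain ⟨op2, hlt2, hinv2', hM2⟩ := hjf (t + 1) ht
        have hkk : α'.length + g t < α'.length + g (t + 1) := by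
          have := hgmono t
          omega
        rcases lt_trichotomy (jf (t + 1)) (α'.length + g t) with hcase | hcase | hcase
        · exfalso
          obtain ⟨i2, op2', hjev2, hkev2, hlt2', hmid⟩ := hM2
          have hiq : i2 = q := by
            rw [hinv2'] at hjev2
            injection Option.some.inj hjev2 with h8 _
            exact h8.symm
          subst hiq
          exact hmid (α'.length + g t) hcase hkk (vres t) (hresβ t (by omega))
        · exfalso
          have h6 := hresβ t (by omega)
          rw [← hcase] at h6
          rw [hinv2'] at h6
          exact (nomatch (Option.some.inj h6))
        · omega
      have hmono : ∀ t', t' ≤ x → ∀ t, t < t' → jf t < jf t' := by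
        intro t'
        induction t' with
        | zero => intro _ t ht; omega
        | succ t'' ih =>
          intro h2 t ht
          have hstep := hjlt t'' h2
          rcases Nat.lt_succ_iff_lt_or_eq.mp ht with h | h
          · exact lt_trans (ih (by omega) t h) hstep
          · rw [h]; exact hstep
      set J : Finset ℕ := (Finset.range (x + 1)).image jf with hJdef
      have hJcard : J.card = x + 1 := by
        rw [hJdef, Finset.card_image_of_injOn, Finset.card_range]
        intro a ha b hb hab
        simp only [Finset.coe_range, Set.mem_Iio] at ha hb
        rcases lt_trichotomy a b with h | h | h
        · exact absurd hab (by have := hmono b (by omega) a h; omega)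
        · exact h
        · exact absurd hab (by have := hmono a (by omega) b h; omega)
      have hmemofJ : ∀ jj ∈ J, ∃ a ∈ (L ((α' ++ β) ++ γ)).take d, a.1 = jj := by
        intro jj hjj
        obtain ⟨t, htmem, rfl⟩ := Finset.mem_image.mp hjj
        have ht : t ≤ x := by
          have := Finset.mem_range.mp htmem
          omega
        obtain ⟨op1, hlt1, hinv1, hM1⟩ := hjf t ht
        have hmem1 : (jf t, vres t) ∈ L (α' ++ β) :=
          (hLin _ hexα'β).complete_mem _ _ _ hM1
        rw [heqtake] at hmem1
        have hmem2 : (jf t, vres t) ∈ (L ((α' ++ β) ++ γ)).take d :=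
          (List.take_prefix_take_left hdge).subset hmem1
        exact ⟨(jf t, vres t), hmem2, rfl⟩
      have hlow : x + 1 ≤ ((L ((α' ++ β) ++ γ)).take d).countP
          (fun a => decide (a.1 ∈ J)) := by
        rw [← hJcard]
        exact card_le_countP _ Prod.fst J hmemofJ
      have hmid2 : ((L ((α' ++ β) ++ γ)).take d).countP (fun a => decide (a.1 ∈ J)) ≤
          (l.take d).countP (fun a => decide (a.1 = q)) := by
        refine countP_le_of_forall₂ (List.forall₂_take d hF2) ?_
        intro a b hR hPa
        simp only [decide_eq_true_eq] at hPa ⊢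
        obtain ⟨t, htmem, hjt⟩ := Finset.mem_image.mp hPa
        have ht : t ≤ x := by
          have := Finset.mem_range.mp htmem
          omega
        obtain ⟨op1, hlt1, hinv1, hM1⟩ := hjf t ht
        obtain ⟨hR1, _⟩ := hR
        have hα'βγ : ((α' ++ β) ++ γ)[a.1]? = some (Event.inv q op1) := by
          rw [← hjt]
          exact getElem?_append_of_some hinv1 γ
        rw [hα'βγ] at hR1
        injection Option.some.inj hR1 with hh1 _
        exact hh1.symm
      omega
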